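/- For every integer n ≥ 2, the Knizhnik–Zamolodchikov connection ⁽ⁿ⁾Γ_{KZ}(z_1,…,z_n) = Σ_{1≤i<j≤n} (A_{ij}/(z_i−z_j)) (dz_i − dz_j) on the ordered configuration space Y_n is (formally) flat, i.e. ∂Γ_i/∂z_j − ∂Γ_j/∂z_i + λ(Γ_iΓ_j − Γ_jΓ_i) = 0 for all 1 ≤ i,j ≤ n. -/

import Mathlib

open Set

universe u

section

variable {𝒜 : Type u} [Ring 𝒜] [Algebra ℂ 𝒜] {n : ℕ}

/-- The ordered configuration space `Y_n ⊆ ℂ^n`. -/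
def configSpace (n : ℕ) : Set (Fin n → ℂ) :=
  {z | ∀ i j : Fin n, i ≠ j → z i ≠ z j}

/-- `h = ∂g/∂z_j` on `U`, computed through a finite tensor representation of `g` by
complex-differentiable functions. -/
def CPartialOf (U : Set (Fin n → ℂ)) (g : (Fin n → ℂ) → 𝒜) (j : Fin n)
    (h : (Fin n → ℂ) → 𝒜) : Prop :=
  ∃ (m : ℕ) (f : Fin m → (Fin n → ℂ) → ℂ) (v : Fin m → 𝒜),
    (∀ k, DifferentiableOn ℂ (f k) U) ∧ (∀ z, g z = ∑ k, f k z • v k) ∧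
    ∀ z ∈ U, h z = ∑ k, (fderiv ℂ (f k) z (Pi.single j 1)) • v k

/-- The `i`-th component of the Knizhnik–Zamolodchikov connection
`⁽ⁿ⁾Γ_KZ = Σ_{i<j} (A_{ij}/(z_i−z_j))(dz_i − dz_j)`, i.e. the coefficient of `dz_i`:
`Γ_i(z) = Σ_{j≠i} A_{ij}/(z_i − z_j)`. -/
noncomputable def kzConn (A : Fin n → Fin n → 𝒜) (i : Fin n) (z : Fin n → ℂ) : 𝒜 :=
  ∑ j ∈ Finset.univ.erase i, ((z i - z j)⁻¹ : ℂ) • A i j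

end

section auxlemmas

set_option linter.unusedSectionVars false

variable {𝒜 : Type u} [Ring 𝒜] [Algebra ℂ 𝒜] {n : ℕ}

/-- Additive rearrangement of the infinitesimal braid relation. -/
lemma kz_key_sub {a b d : 𝒜} (h : (b + a) * d = d * (b + a)) :
    a * d - d * a = -(b * d - d * b) := by
  rw [add_mul, mul_add] at h
  rw [eq_neg_iff_add_eq_zero]
  have h2 : a * d - d * a + (b * d - d * b) = (b * d + a * d) - (d * b + d * a) := by abel
  rw [h2, h, sub_self]

/-- The Arnold identity for the scalar coefficients. -/
lemma kz_arnold {u v : ℂ} (hu : u ≠ 0) (hv : v ≠ 0) (hw : u + v ≠ 0) :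
    u⁻¹ * v⁻¹ + ((u + v)⁻¹ * (-u)⁻¹ - (u + v)⁻¹ * v⁻¹) = 0 := by
  field_simp
  ring

/-- The two components of the KZ connection commute. -/
lemma kz_comm (A : Fin n → Fin n → 𝒜)
    (hsym : ∀ i j : Fin n, A i j = A j i)
    (hb3 : ∀ i j k : Fin n, i ≠ j → i ≠ k → j ≠ k → Commute (A i j + A i k) (A j k))
    (hb4 : ∀ i j k l : Fin n, i ≠ j → i ≠ k → i ≠ l → j ≠ k → j ≠ l → k ≠ l →
      Commute (A i j) (A k l))
    {i j : Fin n} (hij : i ≠ j) {z : Fin n → ℂ} (hz : z ∈ configSpace n) :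
    kzConn A i z * kzConn A j z - kzConn A j z * kzConn A i z = 0 := by
  classical
  set T : Fin n → Fin n → 𝒜 := fun k l =>
    ((z i - z k)⁻¹ * (z j - z l)⁻¹) • (A i k * A j l - A j l * A i k) with hT
  have hmul : ∀ p q : Fin n, kzConn A p z * kzConn A q z =
      ∑ k ∈ Finset.univ.erase p, ∑ l ∈ Finset.univ.erase q,
        ((z p - z k)⁻¹ * (z q - z l)⁻¹) • (A p k * A q l) := by
    intro p q
    rw [kzConn, kzConn, Finset.sum_mul_sum]
    exact Finset.sum_congr rfl fun k _ => Finset.sum_congr rfl fun l _ =>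
      smul_mul_smul_comm _ _ _ _
  have hswap : kzConn A j z * kzConn A i z =
      ∑ k ∈ Finset.univ.erase i, ∑ l ∈ Finset.univ.erase j,
        ((z j - z l)⁻¹ * (z i - z k)⁻¹) • (A j l * A i k) := by
    rw [hmul j i]
    exact Finset.sum_comm
  have hgoal : kzConn A i z * kzConn A j z - kzConn A j z * kzConn A i z =
      ∑ k ∈ Finset.univ.erase i, ∑ l ∈ Finset.univ.erase j, T k l := by
    rw [hmul i j, hswap, ← Finset.sum_sub_distrib]
    refine Finset.sum_congr rfl fun k _ => ?_
    rw [← Finset.sum_sub_distrib]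
    refine Finset.sum_congr rfl fun l _ => ?_
    show _ = ((z i - z k)⁻¹ * (z j - z l)⁻¹) • (A i k * A j l - A j l * A i k)
    rw [smul_sub, mul_comm ((z j - z l)⁻¹) ((z i - z k)⁻¹)]
  rw [hgoal]
  set s : Finset (Fin n) := (Finset.univ.erase i).erase j with hs
  have hjmem : j ∈ Finset.univ.erase i := Finset.mem_erase.mpr ⟨hij.symm, Finset.mem_univ j⟩
  have himem : i ∈ Finset.univ.erase j := Finset.mem_erase.mpr ⟨hij, Finset.mem_univ i⟩
  have hjs : j ∉ s := Finset.notMem_erase j _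
  have his : i ∉ s := fun h => (Finset.notMem_erase i _) (Finset.mem_of_mem_erase h)
  have h1 : Finset.univ.erase i = insert j s := (Finset.insert_erase hjmem).symm
  have h2 : Finset.univ.erase j = insert i s := by
    rw [hs, Finset.erase_right_comm, Finset.insert_erase himem]
  rw [h1, h2, Finset.sum_insert hjs]
  simp only [Finset.sum_insert his]
  have hmem : ∀ m ∈ s, m ≠ j ∧ m ≠ i := fun m hm =>
    ⟨(Finset.mem_erase.mp hm).1, (Finset.mem_erase.mp (Finset.mem_of_mem_erase hm)).1⟩
  have hTji : T j i = 0 := by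
    show ((z i - z j)⁻¹ * (z j - z i)⁻¹) • (A i j * A j i - A j i * A i j) = 0
    rw [hsym j i, sub_self, smul_zero]
  have hdiag : ∀ k ∈ s, ∑ l ∈ s, T k l = T k k := by
    intro k hk
    obtain ⟨hkj, hki⟩ := hmem k hk
    refine Finset.sum_eq_single_of_mem k hk fun l hl hlk => ?_
    obtain ⟨hlj, hli⟩ := hmem l hl
    have hcom : A i k * A j l = A j l * A i k :=
      (hb4 i k j l (Ne.symm hki) hij (Ne.symm hli) hkj (Ne.symm hlk) (Ne.symm hlj)).eq
    show ((z i - z k)⁻¹ * (z j - z l)⁻¹) • (A i k * A j l - A j l * A i k) = 0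
    rw [hcom, sub_self, smul_zero]
  have hm0 : ∀ m ∈ s, T j m + (T m i + T m m) = 0 := by
    intro m hm
    obtain ⟨hmj, hmi⟩ := hmem m hm
    have hu : z i - z j ≠ 0 := sub_ne_zero_of_ne (hz i j hij)
    have hv : z j - z m ≠ 0 := sub_ne_zero_of_ne (hz j m (Ne.symm hmj))
    have hw : z i - z j + (z j - z m) ≠ 0 := by
      rw [show z i - z j + (z j - z m) = z i - z m by ring]
      exact sub_ne_zero_of_ne (hz i m (Ne.symm hmi))
    have e1 : A i m * A j m - A j m * A i m = -(A i j * A j m - A j m * A i j) :=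
      kz_key_sub (hb3 i j m hij (Ne.symm hmi) (Ne.symm hmj)).eq
    have e2 : A i m * A i j - A i j * A i m = A i j * A j m - A j m * A i j := by
      have h := (hb3 m i j hmi hmj hij).eq
      rw [add_comm (A m i) (A m j)] at h
      have h' := kz_key_sub h
      rw [hsym m i, hsym m j, neg_sub] at h'
      rw [h']
    have h0 : (z i - z j)⁻¹ * (z j - z m)⁻¹ +
        ((z i - z m)⁻¹ * (z j - z i)⁻¹ - (z i - z m)⁻¹ * (z j - z m)⁻¹) = 0 := by
      rw [show z j - z i = -(z i - z j) by ring,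
        show z i - z m = (z i - z j) + (z j - z m) by ring]
      exact kz_arnold hu hv hw
    show ((z i - z j)⁻¹ * (z j - z m)⁻¹) • (A i j * A j m - A j m * A i j) +
        (((z i - z m)⁻¹ * (z j - z i)⁻¹) • (A i m * A j i - A j i * A i m) +
          ((z i - z m)⁻¹ * (z j - z m)⁻¹) • (A i m * A j m - A j m * A i m)) = 0
    rw [hsym j i, e2, e1, smul_neg, ← sub_eq_add_neg, ← sub_smul, ← add_smul, h0, zero_smul]
  have hstep : ∑ k ∈ s, (T k i + ∑ l ∈ s, T k l) = ∑ k ∈ s, (T k i + T k k) :=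
    Finset.sum_congr rfl fun k hk => by rw [hdiag k hk]
  rw [hstep, hTji, zero_add, ← Finset.sum_add_distrib]
  exact Finset.sum_eq_zero hm0

end auxlemmas

/-- For every `n ≥ 2`, if the elements `A_{ij} = A_{ji}` satisfy the
infinitesimal braid relations, then the Knizhnik–Zamolodchikov connection on `Y_n` is
formally flat: `∂Γ_i/∂z_j − ∂Γ_j/∂z_i + λ(Γ_iΓ_j − Γ_jΓ_i) = 0` for all `i, j`. -/
theorem statement14 {𝒜 : Type u} [Ring 𝒜] [Algebra ℂ 𝒜]
    (n : ℕ) (hn : 2 ≤ n) (A : Fin n → Fin n → 𝒜)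
    (hsym : ∀ i j : Fin n, A i j = A j i)
    (hbraid₃ : ∀ i j k : Fin n, i ≠ j → i ≠ k → j ≠ k →
      Commute (A i j + A i k) (A j k))
    (hbraid₄ : ∀ i j k l : Fin n, i ≠ j → i ≠ k → i ≠ l → j ≠ k → j ≠ l → k ≠ l →
      Commute (A i j) (A k l)) :
    ∃ dΓ : Fin n → Fin n → (Fin n → ℂ) → 𝒜,
      (∀ j i : Fin n, CPartialOf (configSpace n) (kzConn A i) j (dΓ j i)) ∧
      ∀ i j : Fin n, ∀ z ∈ configSpace n,
        (PowerSeries.C (R := 𝒜)) (dΓ j i z - dΓ i j z) +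
          PowerSeries.X *
            (PowerSeries.C (R := 𝒜)) (kzConn A i z * kzConn A j z - kzConn A j z * kzConn A i z)
          = 0 := by
  classical
  refine ⟨fun j i z => ∑ k ∈ Finset.univ.erase i,
      (-(((z i - z k) ^ 2)⁻¹) * ((Pi.single j (1 : ℂ) : Fin n → ℂ) i
        - (Pi.single j (1 : ℂ) : Fin n → ℂ) k)) • A i k, ?_, ?_⟩
  · -- CPartialOf
    intro j i
    refine ⟨n, fun k z => if k = i then 0 else (z i - z k)⁻¹, fun k => A i k, ?_, ?_, ?_⟩
    · intro k
      by_cases hk : k = i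
      · simp only [if_pos hk]
        exact differentiableOn_const 0
      · simp only [if_neg hk]
        refine DifferentiableOn.inv ?_ ?_
        · exact (((ContinuousLinearMap.proj (R := ℂ) (φ := fun _ : Fin n => ℂ)
            i).differentiable).sub ((ContinuousLinearMap.proj (R := ℂ)
            (φ := fun _ : Fin n => ℂ) k).differentiable)).differentiableOn
        · exact fun z hz => sub_ne_zero_of_ne (hz i k fun h => hk h.symm)
    · intro z
      calc kzConn A i z
          = ∑ k ∈ Finset.univ.erase i, (if k = i then 0 else (z i - z k)⁻¹) • A i k := by
            rw [kzConn]
            exact Finset.sum_congr rfl fun k hk => by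
              rw [if_neg (Finset.mem_erase.mp hk).1]
        _ = ∑ k, (if k = i then 0 else (z i - z k)⁻¹) • A i k :=
            Finset.sum_erase _ (by simp)
    · intro z hz
      have hfd : ∀ k : Fin n, k ≠ i →
          fderiv ℂ (fun z : Fin n → ℂ => (z i - z k)⁻¹) z (Pi.single j 1) =
            -(((z i - z k) ^ 2)⁻¹) * ((Pi.single j (1 : ℂ) : Fin n → ℂ) i
              - (Pi.single j (1 : ℂ) : Fin n → ℂ) k) := by
        intro k hk
        have hne : z i - z k ≠ 0 := sub_ne_zero_of_ne (hz i k fun h => hk h.symm)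
        have hL : HasFDerivAt (fun z : Fin n → ℂ => z i - z k)
            ((ContinuousLinearMap.proj i) - (ContinuousLinearMap.proj k)) z :=
          ((ContinuousLinearMap.proj (R := ℂ) (φ := fun _ : Fin n => ℂ)
            i).hasFDerivAt).sub ((ContinuousLinearMap.proj (R := ℂ)
            (φ := fun _ : Fin n => ℂ) k).hasFDerivAt)
        have hinv := (hasDerivAt_inv hne).comp_hasFDerivAt z hL
        have heq : fderiv ℂ (fun z : Fin n → ℂ => (z i - z k)⁻¹) z =
            (-((z i - z k) ^ 2)⁻¹) • ((ContinuousLinearMap.proj i)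
              - (ContinuousLinearMap.proj k)) := hinv.fderiv
        rw [heq]
        simp only [ContinuousLinearMap.smul_apply, ContinuousLinearMap.sub_apply,
          ContinuousLinearMap.proj_apply, smul_eq_mul]
      calc (∑ k ∈ Finset.univ.erase i,
            (-(((z i - z k) ^ 2)⁻¹) * ((Pi.single j (1 : ℂ) : Fin n → ℂ) i
              - (Pi.single j (1 : ℂ) : Fin n → ℂ) k)) • A i k)
          = ∑ k ∈ Finset.univ.erase i,
            (fderiv ℂ (fun z : Fin n → ℂ =>
              if k = i then 0 else (z i - z k)⁻¹) z (Pi.single j 1)) • A i k := by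
            refine Finset.sum_congr rfl fun k hk => ?_
            have hki := (Finset.mem_erase.mp hk).1
            simp only [if_neg hki]
            rw [hfd k hki]
        _ = ∑ k, (fderiv ℂ (fun z : Fin n → ℂ =>
              if k = i then 0 else (z i - z k)⁻¹) z (Pi.single j 1)) • A i k := by
            refine Finset.sum_erase _ ?_
            have hzero : (fun z : Fin n → ℂ =>
                if (i : Fin n) = i then (0 : ℂ) else (z i - z i)⁻¹) = fun _ => 0 := by
              funext w
              simp
            rw [hzero]
            simp
  · -- flatness
    intro i j z hz
    by_cases hij : i = j
    · subst hij
      simp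
    · have hcomm := kz_comm A hsym hbraid₃ hbraid₄ hij hz
      have hd : ∀ p q : Fin n, p ≠ q →
          (∑ k ∈ Finset.univ.erase p,
            (-(((z p - z k) ^ 2)⁻¹) * ((Pi.single q (1 : ℂ) : Fin n → ℂ) p
              - (Pi.single q (1 : ℂ) : Fin n → ℂ) k)) • A p k)
            = ((z p - z q) ^ 2)⁻¹ • A p q := by
        intro p q hpq
        have hqmem : q ∈ Finset.univ.erase p :=
          Finset.mem_erase.mpr ⟨Ne.symm hpq, Finset.mem_univ q⟩
        have hmain := Finset.sum_eq_single_of_mem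
          (f := fun k => (-(((z p - z k) ^ 2)⁻¹) * ((Pi.single q (1 : ℂ) : Fin n → ℂ) p
            - (Pi.single q (1 : ℂ) : Fin n → ℂ) k)) • A p k) q hqmem
          (fun k hk hkq => by
            beta_reduce
            rw [Pi.single_eq_of_ne hpq, Pi.single_eq_of_ne hkq]
            norm_num)
        rw [hmain]
        beta_reduce
        rw [Pi.single_eq_same, Pi.single_eq_of_ne hpq]
        norm_num
      beta_reduce
      rw [hd j i (Ne.symm hij), hd i j hij]
      rw [show ((z j - z i) ^ 2 : ℂ) = (z i - z j) ^ 2 by ring, hsym j i, sub_self,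
        hcomm]
      simp
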